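/- There exists no C² function u : ℝ² → ℝ satisfying L_u(L_u u) = 0 on all of ℝ² together with the initial conditions u(x,0) = −x and (L_u u)(x,0) = x/2 for all x ∈ ℝ. -/

import Mathlib

/-- The operator `L_u` acting on `v`:  `(L_u v)(x,t) = ∂v/∂t + u·∂v/∂x`,
with coordinates `(x,t)` on `ℝ × ℝ`. -/
noncomputable def Lop (u v : ℝ × ℝ → ℝ) : ℝ × ℝ → ℝ :=
  fun p => fderiv ℝ v p (0, 1) + u p * fderiv ℝ v p (1, 0)

open Set Real

private lemma pair_eval (L : ℝ × ℝ →L[ℝ] ℝ) (a : ℝ) :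
    L (a, 1) = a * L (1, 0) + L (0, 1) := by
  have h : ((a, (1:ℝ)) : ℝ × ℝ) = a • ((1:ℝ), (0:ℝ)) + ((0:ℝ), (1:ℝ)) := by
    simp [Prod.ext_iff]
  rw [h, map_add, map_smul, smul_eq_mul]

private lemma key (u : ℝ × ℝ → ℝ) (hu : ContDiff ℝ 2 u)
    (hpde : ∀ p : ℝ × ℝ, Lop u (Lop u u) p = 0)
    (hinit : ∀ x : ℝ, u (x, 0) = -x) (hw0 : ∀ x : ℝ, Lop u u (x, 0) = x / 2)
    (x₀ : ℝ) : Lop u u (0, 2) = x₀ / 2 := by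
  set w : ℝ × ℝ → ℝ := Lop u u with hw_def
  have hu1 : ContDiff ℝ 1 u := hu.of_le one_le_two
  have hfd : ContDiff ℝ 1 (fun p => fderiv ℝ u p) := hu.fderiv_right (le_refl 2)
  have hcomp : ∀ e : ℝ × ℝ, ContDiff ℝ 1 (fun p => fderiv ℝ u p e) := fun e =>
    (ContinuousLinearMap.apply ℝ ℝ e).contDiff.comp hfd
  have hw1 : ContDiff ℝ 1 w := by
    rw [hw_def]; unfold Lop
    exact (hcomp (0, 1)).add (hu1.mul (hcomp (1, 0)))
  have hud : Differentiable ℝ u := hu1.differentiable one_ne_zero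
  have hwd : Differentiable ℝ w := hw1.differentiable one_ne_zero
  -- the characteristic curve
  set P : ℝ → ℝ × ℝ := fun t => (x₀ * (1 - t / 2) ^ 2, t) with hP_def
  have hPcont : Continuous P := by fun_prop
  have hPd : ∀ t : ℝ, HasDerivAt P (x₀ * (t / 2 - 1), 1) t := by
    intro t
    have h0 : HasDerivAt (fun t : ℝ => 1 - t / 2) (-(2⁻¹)) t := by
      simpa using ((hasDerivAt_id t).div_const 2).const_sub 1
    have h1 : HasDerivAt (fun t : ℝ => x₀ * (1 - t / 2) ^ 2)
        (x₀ * (2 * (1 - t / 2) ^ 1 * (-(2⁻¹)))) t := (h0.pow 2).const_mul x₀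
    have h2 : HasDerivAt (fun t : ℝ => x₀ * (1 - t / 2) ^ 2) (x₀ * (t / 2 - 1)) t := by
      convert h1 using 1; ring
    exact h2.prodMk (hasDerivAt_id t)
  set F : ℝ → ℝ := fun t => u (P t) - x₀ * (t / 2 - 1) with hF_def
  set G : ℝ → ℝ := fun t => w (P t) - x₀ / 2 with hG_def
  set ux : ℝ → ℝ := fun t => fderiv ℝ u (P t) (1, 0) with hux_def
  set wx : ℝ → ℝ := fun t => fderiv ℝ w (P t) (1, 0) with hwx_def
  -- derivatives of F and G
  have hF' : ∀ t : ℝ, HasDerivAt F (G t - F t * ux t) t := by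
    intro t
    have h1 : HasDerivAt (fun t => u (P t)) (fderiv ℝ u (P t) (x₀ * (t / 2 - 1), 1)) t :=
      (hud (P t)).hasFDerivAt.comp_hasDerivAt t (hPd t)
    have h2 : HasDerivAt (fun t : ℝ => x₀ * (t / 2 - 1)) (x₀ / 2) t := by
      simpa [div_eq_mul_inv] using (((hasDerivAt_id t).div_const 2).sub_const 1).const_mul x₀
    have h3 := h1.sub h2
    have heq : fderiv ℝ u (P t) (x₀ * (t / 2 - 1), 1) - x₀ / 2 = G t - F t * ux t := by
      have hwP : w (P t) = fderiv ℝ u (P t) (0, 1) + u (P t) * fderiv ℝ u (P t) (1, 0) := rfl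
      rw [pair_eval]
      simp only [hF_def, hG_def, hux_def, hwP]
      ring
    rw [heq] at h3
    exact h3
  have hG' : ∀ t : ℝ, HasDerivAt G (-(F t * wx t)) t := by
    intro t
    have h1 : HasDerivAt (fun t => w (P t)) (fderiv ℝ w (P t) (x₀ * (t / 2 - 1), 1)) t :=
      (hwd (P t)).hasFDerivAt.comp_hasDerivAt t (hPd t)
    have h2 : HasDerivAt G (fderiv ℝ w (P t) (x₀ * (t / 2 - 1), 1)) t := h1.sub_const _
    have hpdeP : fderiv ℝ w (P t) (0, 1) + u (P t) * fderiv ℝ w (P t) (1, 0) = 0 := hpde (P t)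
    have heq : fderiv ℝ w (P t) (x₀ * (t / 2 - 1), 1) = -(F t * wx t) := by
      rw [pair_eval]
      have : u (P t) = F t + x₀ * (t / 2 - 1) := by simp [hF_def]
      rw [this] at hpdeP
      simp only [hwx_def]
      linarith [hpdeP]
    rw [heq] at h2
    exact h2
  -- the vector function and Gronwall
  set f : ℝ → ℝ × ℝ := fun t => (F t, G t) with hf_def
  set f' : ℝ → ℝ × ℝ := fun t => (G t - F t * ux t, -(F t * wx t)) with hf'_def
  have hfderiv : ∀ t : ℝ, HasDerivAt f (f' t) t := fun t => (hF' t).prodMk (hG' t)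
  -- bound on the coefficients
  have huxc : Continuous ux := by
    exact ((ContinuousLinearMap.apply ℝ ℝ ((1:ℝ), (0:ℝ))).continuous.comp
      hfd.continuous).comp hPcont
  have hwxc : Continuous wx := by
    have : Continuous (fun p => fderiv ℝ w p) := (hw1.fderiv_right (m := 0) (by norm_num)).continuous
    exact ((ContinuousLinearMap.apply ℝ ℝ ((1:ℝ), (0:ℝ))).continuous.comp this).comp hPcont
  have hFc : Continuous F := by
    have : Continuous fun t => u (P t) := hud.continuous.comp hPcont
    fun_prop
  have hGc : Continuous G := by
    have : Continuous fun t => w (P t) := hwd.continuous.comp hPcont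
    fun_prop
  obtain ⟨tM, _, htM⟩ := (isCompact_Icc (a := (0:ℝ)) (b := 2)).exists_isMaxOn
    (nonempty_Icc.2 (by norm_num))
    (((continuous_const.add huxc.abs).add hwxc.abs).continuousOn)
  set K : ℝ := 1 + |ux tM| + |wx tM| with hK_def
  have hKt : ∀ t ∈ Icc (0:ℝ) 2, 1 + |ux t| + |wx t| ≤ K := htM
  have bound : ∀ t ∈ Ico (0:ℝ) 2, ‖f' t‖ ≤ K * ‖f t‖ + 0 := by
    intro t ht
    have htK := hKt t (Ico_subset_Icc_self ht)
    have hFn : |F t| ≤ ‖f t‖ := by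
      simp only [hf_def, Prod.norm_def, Real.norm_eq_abs]
      exact le_max_left _ _
    have hGn : |G t| ≤ ‖f t‖ := by
      simp only [hf_def, Prod.norm_def, Real.norm_eq_abs]
      exact le_max_right _ _
    have hfnn : (0:ℝ) ≤ ‖f t‖ := norm_nonneg _
    rw [add_zero]
    have h1 : |G t - F t * ux t| ≤ K * ‖f t‖ := by
      calc |G t - F t * ux t| ≤ |G t| + |F t| * |ux t| := by
            refine (abs_sub _ _).trans ?_
            rw [abs_mul]
      _ ≤ ‖f t‖ + ‖f t‖ * |ux t| := by
            have := mul_le_mul_of_nonneg_right hFn (abs_nonneg (ux t))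
            linarith
      _ ≤ K * ‖f t‖ := by nlinarith [abs_nonneg (ux t), abs_nonneg (wx t)]
    have h2 : |-(F t * wx t)| ≤ K * ‖f t‖ := by
      rw [abs_neg, abs_mul]
      have := mul_le_mul_of_nonneg_right hFn (abs_nonneg (wx t))
      nlinarith [abs_nonneg (ux t), abs_nonneg (wx t)]
    simp only [hf'_def, Prod.norm_def, Real.norm_eq_abs]
    exact max_le h1 h2
  have hf0 : f 0 = (0, 0) := by
    have hP0 : P 0 = (x₀, 0) := by simp [hP_def]
    simp only [hf_def, hF_def, hG_def, hP0, hinit x₀, hw0 x₀]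
    norm_num
  have hgron := norm_le_gronwallBound_of_norm_deriv_right_le
    (f := f) (f' := f') (δ := 0) (K := K) (ε := 0) (a := 0) (b := 2)
    ((hFc.prodMk hGc).continuousOn)
    (fun t _ => (hfderiv t).hasDerivWithinAt)
    (by rw [hf0]; simp [Prod.norm_def]) bound
  have h2 : ‖f 2‖ ≤ 0 := by
    have := hgron 2 (by norm_num)
    rwa [gronwallBound_ε0_δ0] at this
  have hf2 : f 2 = 0 := norm_le_zero_iff.mp h2
  have hG2 : G 2 = 0 := by
    have := congrArg Prod.snd hf2
    simpa [hf_def] using this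
  have hP2 : P 2 = (0, 2) := by norm_num [hP_def]
  have hfin : w (P 2) - x₀ / 2 = 0 := hG2
  rw [hP2] at hfin
  linarith

theorem stmt13 :
    ¬ ∃ u : ℝ × ℝ → ℝ, ContDiff ℝ 2 u ∧ (∀ p : ℝ × ℝ, Lop u (Lop u u) p = 0) ∧
      (∀ x : ℝ, u (x, 0) = -x) ∧ (∀ x : ℝ, Lop u u (x, 0) = x / 2) := by
  rintro ⟨u, hu, hpde, hinit, hw0⟩
  have h0 := key u hu hpde hinit hw0 0
  have h1 := key u hu hpde hinit hw0 1
  rw [h0] at h1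
  norm_num at h1
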